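/- (Van Loan block-exponential integral formula) Let A and B be M×M real matrices and δ ≥ 0. Form the 2M×2M block matrix C = [[A, B], [0, A]]. Then the upper-right M×M block of exp(δ·C) equals ∫₀^δ exp((δ − x)·A) · B · exp(x·A) dx. -/

import Mathlib

open NormedSpace

/-- Van Loan block-exponential integral formula: the upper-right block of
exp(δ·[[A,B],[0,A]]) equals ∫₀^δ exp((δ−x)·A)·B·exp(x·A) dx. -/
theorem van_loan_block_exponential (M : ℕ) (A B : Matrix (Fin M) (Fin M) ℝ)
    (δ : ℝ) (hδ : 0 ≤ δ) :
    ∀ i j : Fin M,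
      exp (δ • (Matrix.fromBlocks A B 0 A)) (Sum.inl i) (Sum.inr j)
        = ∫ x in (0 : ℝ)..δ, (exp ((δ - x) • A) * B * exp (x • A)) i j := by
  letI := Matrix.linftyOpNormedAddCommGroup (m := Fin M) (n := Fin M) (α := ℝ)
  letI := Matrix.linftyOpNormedRing (n := Fin M) (α := ℝ)
  letI := Matrix.linftyOpNormedAlgebra (n := Fin M) (R := ℝ) (α := ℝ)
  letI := Matrix.linftyOpNormedRing (n := Fin M ⊕ Fin M) (α := ℝ)
  letI := Matrix.linftyOpNormedAlgebra (n := Fin M ⊕ Fin M) (R := ℝ) (α := ℝ)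
  letI := Matrix.linftyOpNormedAlgebra (n := Fin M) (R := ℚ) (α := ℝ)
  letI := Matrix.linftyOpNormedAlgebra (n := Fin M ⊕ Fin M) (R := ℚ) (α := ℝ)
  set C : Matrix (Fin M ⊕ Fin M) (Fin M ⊕ Fin M) ℝ := Matrix.fromBlocks A B 0 A with hC
  -- basic exp inverse lemmas
  have hAinv : ∀ t : ℝ, exp (t • A) * exp ((-t) • A) = 1 := by
    intro t
    rw [← Matrix.exp_add_of_commute _ _ (((Commute.refl A).smul_left t).smul_right (-t))]
    simp [← add_smul]
  have hCinv : ∀ t : ℝ, exp (t • C) * exp ((-t) • C) = 1 := by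
    intro t
    rw [← Matrix.exp_add_of_commute _ _ (((Commute.refl C).smul_left t).smul_right (-t))]
    simp [← add_smul]
  -- continuity of the integrand
  have hcont : Continuous fun x : ℝ => exp ((-x) • A) * B * exp (x • A) := by
    have h1 : Continuous fun x : ℝ => exp ((-x) • A) :=
      exp_continuous.comp (continuous_neg.smul continuous_const)
    have h2 : Continuous fun x : ℝ => exp (x • A) :=
      exp_continuous.comp (continuous_id.smul continuous_const)
    exact (h1.mul continuous_const).mul h2
  set K : ℝ → Matrix (Fin M) (Fin M) ℝ :=
    fun t => ∫ x in (0:ℝ)..t, exp ((-x) • A) * B * exp (x • A) with hK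
  have hKderiv : ∀ t : ℝ, HasDerivAt K (exp ((-t) • A) * B * exp (t • A)) t :=
    fun t => (hcont.integral_hasStrictDerivAt 0 t).hasDerivAt
  -- block-building continuous linear map
  let Lb : (Matrix (Fin M) (Fin M) ℝ × Matrix (Fin M) (Fin M) ℝ) →L[ℝ]
      Matrix (Fin M ⊕ Fin M) (Fin M ⊕ Fin M) ℝ :=
    LinearMap.toContinuousLinearMap
      { toFun := fun p => Matrix.fromBlocks p.1 p.2 0 p.1
        map_add' := by
          rintro ⟨a, b⟩ ⟨a', b'⟩
          ext (i | i) (j | j) <;> simp [Matrix.fromBlocks]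
        map_smul' := by
          rintro c ⟨a, b⟩
          ext (i | i) (j | j) <;> simp [Matrix.fromBlocks] }
  have Lb_apply : ∀ p q : Matrix (Fin M) (Fin M) ℝ, Lb (p, q) = Matrix.fromBlocks p q 0 p :=
    fun _ _ => rfl
  set Y : ℝ → Matrix (Fin M ⊕ Fin M) (Fin M ⊕ Fin M) ℝ :=
    fun t => Lb (exp (t • A), exp (t • A) * K t) with hY
  have hYderiv : ∀ t : ℝ, HasDerivAt Y (C * Y t) t := by
    intro t
    have h1 : HasDerivAt (fun u : ℝ => exp (u • A)) (A * exp (t • A)) t :=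
      hasDerivAt_exp_smul_const' A t
    have h2 : HasDerivAt (fun u : ℝ => exp (u • A) * K u)
        (A * exp (t • A) * K t + exp (t • A) * (exp ((-t) • A) * B * exp (t • A))) t :=
      h1.mul (hKderiv t)
    have h3 := Lb.hasFDerivAt.comp_hasDerivAt t (h1.prodMk h2)
    refine h3.congr_deriv (Eq.symm ?_)
    have key : exp (t • A) * (exp ((-t) • A) * B * exp (t • A))
        = B * exp (t • A) := by
      rw [← mul_assoc, ← mul_assoc, hAinv, one_mul]
    show C * Y t = Matrix.fromBlocks (A * exp (t • A))
      (A * exp (t • A) * K t + exp (t • A) * (exp ((-t) • A) * B * exp (t • A))) 0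
      (A * exp (t • A))
    have hYt : Y t = Matrix.fromBlocks (exp (t • A)) (exp (t • A) * K t) 0
        (exp (t • A)) := rfl
    rw [hYt, hC, Matrix.fromBlocks_multiply, key]
    congr 1 <;> simp [Matrix.mul_assoc, mul_assoc]
  -- Z t = exp(-t•C) * Y t is constant
  set Z : ℝ → Matrix (Fin M ⊕ Fin M) (Fin M ⊕ Fin M) ℝ :=
    fun t => exp ((-t) • C) * Y t with hZ
  have hZderiv : ∀ t : ℝ, HasDerivAt Z 0 t := by
    intro t
    have hneg : HasDerivAt (fun u : ℝ => -u) (-1) t := (hasDerivAt_id t).neg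
    have hE : HasDerivAt (fun u : ℝ => exp ((-u) • C))
        ((-1 : ℝ) • (C * exp ((-t) • C))) t :=
      (hasDerivAt_exp_smul_const' C (-t)).scomp t hneg
    have hprod := hE.mul (hYderiv t)
    have hcomm : exp ((-t) • C) * C = C * exp ((-t) • C) :=
      (((Commute.refl C).smul_left (-t)).exp_left).eq
    have key : (-1 : ℝ) • (C * exp ((-t) • C)) * Y t
        + exp ((-t) • C) * (C * Y t) = 0 := by
      rw [← mul_assoc, hcomm]
      simp
    refine hprod.congr_deriv (Eq.symm ?_)
    exact key.symm
  have hZconst : Z δ = Z 0 :=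
    is_const_of_deriv_eq_zero (fun t => (hZderiv t).differentiableAt)
      (fun t => (hZderiv t).deriv) δ 0
  have hY0 : Y 0 = 1 := by
    have hK0 : K 0 = 0 := by rw [hK]; simp
    have hYt : Y 0 = Matrix.fromBlocks (exp ((0:ℝ) • A)) (exp ((0:ℝ) • A) * K 0) 0
        (exp ((0:ℝ) • A)) := rfl
    rw [hYt, hK0]
    simp [Matrix.fromBlocks_one]
  have hZ0 : Z 0 = 1 := by rw [hZ]; simp [hY0]
  have h1 : exp ((-δ) • C) * Y δ = 1 := by rw [← hZ0, ← hZconst]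
  have hYδ : Y δ = exp (δ • C) := by
    have h2 : exp (δ • C) * (exp ((-δ) • C) * Y δ) = exp (δ • C) * 1 := by rw [h1]
    rwa [← mul_assoc, hCinv δ, one_mul, mul_one] at h2
  intro i j
  have hblock : exp (δ • C) (Sum.inl i) (Sum.inr j) = (exp (δ • A) * K δ) i j := by
    have hYt : Y δ = Matrix.fromBlocks (exp (δ • A)) (exp (δ • A) * K δ) 0
        (exp (δ • A)) := rfl
    rw [← hYδ, hYt]
    simp [Matrix.fromBlocks]
  rw [hC] at hblock
  rw [hblock]
  -- pull the constant matrix into the integral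
  have hint : @IntervalIntegrable _ _ NormedAddGroup.toENormedAddMonoid (fun x : ℝ => exp ((-x) • A) * B * exp (x • A))
      MeasureTheory.volume 0 δ := hcont.intervalIntegrable 0 δ
  have hpull : exp (δ • A) * K δ
      = ∫ x in (0:ℝ)..δ, exp (δ • A) * (exp ((-x) • A) * B * exp (x • A)) := by
    rw [hK]
    exact ((ContinuousLinearMap.mul ℝ (Matrix (Fin M) (Fin M) ℝ) (exp (δ • A))).intervalIntegral_comp_comm hint).symm
  rw [hpull]
  -- entrywise integral via the entry projection CLM
  let Le : Matrix (Fin M) (Fin M) ℝ →L[ℝ] ℝ :=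
    LinearMap.toContinuousLinearMap
      { toFun := fun m => m i j
        map_add' := fun _ _ => rfl
        map_smul' := fun _ _ => rfl }
  have hint2 : @IntervalIntegrable _ _ NormedAddGroup.toENormedAddMonoid
      (fun x : ℝ => exp (δ • A) * (exp ((-x) • A) * B * exp (x • A)))
      MeasureTheory.volume 0 δ := (continuous_const.mul hcont).intervalIntegrable 0 δ
  have hentry := (Le.intervalIntegral_comp_comm hint2).symm
  have hLe : ∀ m : Matrix (Fin M) (Fin M) ℝ, Le m = m i j := fun _ => rfl
  calc (∫ x in (0:ℝ)..δ, exp (δ • A) * (exp ((-x) • A) * B * exp (x • A))) i j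
      = Le (∫ x in (0:ℝ)..δ, exp (δ • A) * (exp ((-x) • A) * B * exp (x • A))) :=
        (hLe _).symm
    _ = ∫ x in (0:ℝ)..δ, Le (exp (δ • A) * (exp ((-x) • A) * B * exp (x • A))) := hentry
    _ = ∫ x in (0:ℝ)..δ, (exp ((δ - x) • A) * B * exp (x • A)) i j := by
        congr 1
        ext x
        rw [hLe]
        have hmul : exp (δ • A) * exp ((-x) • A) = exp ((δ - x) • A) := by
          rw [← Matrix.exp_add_of_commute _ _ (((Commute.refl A).smul_left δ).smul_right (-x))]
          congr 1
          rw [← add_smul]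
          ring_nf
        rw [← mul_assoc, ← mul_assoc, hmul]
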